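/- Let T be a compact operator on a Banach space V and λ ≠ 0. Then the range of λI − T is closed. -/

import Mathlib

open Metric Set

theorem compact_range_closed {𝕜 V : Type*} [RCLike 𝕜] [NormedAddCommGroup V]
    [NormedSpace 𝕜 V] [CompleteSpace V] (T : V →L[𝕜] V) (hT : IsCompactOperator T)
    (lam : 𝕜) (hlam : lam ≠ 0) :
    IsClosed (LinearMap.range ((lam • ContinuousLinearMap.id 𝕜 V - T : V →L[𝕜] V) : V →ₗ[𝕜] V) : Set V) := by
  set S : V →L[𝕜] V := lam • ContinuousLinearMap.id 𝕜 V - T with hS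
  have hSapp : ∀ x : V, S x = lam • x - T x := fun x => rfl
  -- compact set containing T '' closedBall 0 1
  obtain ⟨K, hK, hTK⟩ := hT.image_closedBall_subset_compact (1 : ℝ)
  -- the kernel of S is finite dimensional
  have hker_closed : IsClosed ((LinearMap.ker (S : V →ₗ[𝕜] V) : Submodule 𝕜 V) : Set V) :=
    ContinuousLinearMap.isClosed_ker S
  have hker_fd : FiniteDimensional 𝕜 (LinearMap.ker (S : V →ₗ[𝕜] V)) := by
    apply FiniteDimensional.of_isCompact_closedBall₀ 𝕜 (r := 1) one_pos
    have key : IsCompact (((LinearMap.ker (S : V →ₗ[𝕜] V) : Submodule 𝕜 V) : Set V) ∩ closedBall (0 : V) 1) := by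
      have hKc : IsCompact ((fun v : V => lam⁻¹ • v) '' K) := hK.image (continuous_const_smul _)
      apply hKc.of_isClosed_subset (hker_closed.inter Metric.isClosed_closedBall)
      rintro x ⟨hx, hx1⟩
      have hx0 : S x = 0 := LinearMap.mem_ker.mp hx
      have hTx : T x = lam • x := by
        have h : lam • x - T x = 0 := by rw [← hSapp x, hx0]
        exact (sub_eq_zero.mp h).symm
      refine ⟨T x, hTK ⟨x, hx1, rfl⟩, ?_⟩
      show lam⁻¹ • T x = x
      rw [hTx, smul_smul, inv_mul_cancel₀ hlam, one_smul]
    have hemb := hker_closed.isClosedEmbedding_subtypeVal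
    have hpre : (closedBall (0 : LinearMap.ker (S : V →ₗ[𝕜] V)) 1) =
        Subtype.val ⁻¹' (((LinearMap.ker (S : V →ₗ[𝕜] V) : Submodule 𝕜 V) : Set V) ∩ closedBall (0 : V) 1) := by
      ext x
      simp only [mem_closedBall, dist_eq_norm, sub_zero, mem_preimage, mem_inter_iff,
        Submodule.coe_norm]
      exact ⟨fun h => ⟨x.2, h⟩, fun h => h.2⟩
    rw [hpre]
    exact hemb.isCompact_preimage key
  -- closed complement q of the kernel
  obtain ⟨q, hq_closed, hq_compl⟩ :=
    (Submodule.ClosedComplemented.of_finiteDimensional (LinearMap.ker (S : V →ₗ[𝕜] V))).exists_isClosed_isCompl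
  haveI : CompleteSpace q := hq_closed.completeSpace_coe
  set f : q →L[𝕜] V := S.comp q.subtypeL with hf
  -- f is bounded below
  have hbdd : ∃ c : ℝ, 0 < c ∧ ∀ x : q, c * ‖x‖ ≤ ‖f x‖ := by
    by_contra hcon
    push_neg at hcon
    -- construct a sequence of unit vectors with f u n → 0
    have hseq : ∀ n : ℕ, ∃ u : q, ‖u‖ = 1 ∧ ‖f u‖ < 1 / (n + 1) := by
      intro n
      obtain ⟨x, hx⟩ := hcon (1 / (n + 1)) (by positivity)
      have hx0 : x ≠ 0 := by
        rintro rfl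
        rw [norm_zero, mul_zero] at hx
        exact absurd hx (by simp)
      have hxn : ‖x‖ ≠ 0 := norm_ne_zero_iff.mpr hx0
      have hxpos : (0:ℝ) < ‖x‖ := lt_of_le_of_ne (norm_nonneg x) (Ne.symm hxn)
      refine ⟨((‖x‖ : ℝ) : 𝕜)⁻¹ • x, ?_, ?_⟩
      · rw [norm_smul, norm_inv, RCLike.norm_ofReal, abs_of_nonneg (norm_nonneg x),
          inv_mul_cancel₀ hxn]
      · rw [map_smul, norm_smul, norm_inv, RCLike.norm_ofReal,
          abs_of_nonneg (norm_nonneg x), inv_mul_lt_iff₀ hxpos]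
        calc ‖f x‖ < 1 / (n + 1) * ‖x‖ := hx
          _ = ‖x‖ * (1 / (n + 1)) := by ring
    choose u hu1 hu2 using hseq
    have hfu : Filter.Tendsto (fun n => f (u n)) Filter.atTop (nhds 0) := by
      rw [tendsto_zero_iff_norm_tendsto_zero]
      apply squeeze_zero (fun n => norm_nonneg _) (fun n => le_of_lt (hu2 n))
      exact tendsto_one_div_add_atTop_nhds_zero_nat
    -- T (u n) lies in the compact K, extract convergent subsequence
    have hmem : ∀ n, T (u n) ∈ K := by
      intro n
      apply hTK
      refine ⟨(u n : V), ?_, rfl⟩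
      simp only [mem_closedBall, dist_eq_norm, sub_zero, ← Submodule.coe_norm, hu1 n, le_refl]
    obtain ⟨y, _, φ, hφ, hconv⟩ := hK.tendsto_subseq hmem
    -- lam • u (φ n) = S (u (φ n)) + T (u (φ n)) → 0 + y
    have hlu : Filter.Tendsto (fun n => lam • ((u (φ n) : V))) Filter.atTop (nhds y) := by
      have h1 : ∀ n, lam • ((u (φ n) : V)) = f (u (φ n)) + T (u (φ n)) := by
        intro n
        have := hSapp (u (φ n) : V)
        simp only [hf, ContinuousLinearMap.comp_apply, Submodule.subtypeL_apply]
        rw [this]; abel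
      simp only [h1]
      simpa using ((hfu.comp hφ.tendsto_atTop).add hconv)
    have hu_conv : Filter.Tendsto (fun n => ((u (φ n) : V))) Filter.atTop (nhds (lam⁻¹ • y)) := by
      have := hlu.const_smul (lam⁻¹)
      simpa [smul_smul, inv_mul_cancel₀ hlam] using this
    set x := lam⁻¹ • y with hx
    have hxq : x ∈ q := by
      exact hq_closed.mem_of_tendsto hu_conv (Filter.Eventually.of_forall fun n => (u (φ n)).2)
    have hxnorm : ‖x‖ = 1 := by
      have hn : Filter.Tendsto (fun n => ‖((u (φ n) : V))‖) Filter.atTop (nhds ‖x‖) :=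
        (continuous_norm.continuousAt.tendsto.comp hu_conv)
      have heq : ∀ n, ‖((u (φ n) : V))‖ = 1 := fun n => by
        rw [← Submodule.coe_norm]; exact hu1 (φ n)
      rw [Filter.tendsto_congr heq] at hn
      exact tendsto_nhds_unique hn tendsto_const_nhds
    have hxker : x ∈ LinearMap.ker (S : V →ₗ[𝕜] V) := by
      have hSc : Filter.Tendsto (fun n => S ((u (φ n) : V))) Filter.atTop (nhds (S x)) :=
        (S.continuous.continuousAt.tendsto.comp hu_conv)
      have hS0 : Filter.Tendsto (fun n => S ((u (φ n) : V))) Filter.atTop (nhds 0) := by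
        have heq : ∀ n, S ((u (φ n) : V)) = f (u (φ n)) := fun n => rfl
        rw [Filter.tendsto_congr heq]
        exact hfu.comp hφ.tendsto_atTop
      exact LinearMap.mem_ker.mpr (tendsto_nhds_unique hSc hS0)
    have hx00 : x = 0 := by
      have hbot := hq_compl.inf_eq_bot
      have hmem2 : x ∈ (LinearMap.ker (S : V →ₗ[𝕜] V) ⊓ q : Submodule 𝕜 V) := ⟨hxker, hxq⟩
      rwa [hbot, Submodule.mem_bot] at hmem2
    rw [hx00, norm_zero] at hxnorm
    exact one_ne_zero hxnorm.symm
  obtain ⟨c, hc, hbound⟩ := hbdd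
  -- f is antilipschitz, hence has closed range
  have hanti : AntilipschitzWith (⟨c⁻¹, by positivity⟩ : NNReal) f := by
    apply ContinuousLinearMap.antilipschitz_of_bound
    intro x
    have h := hbound x
    change ‖x‖ ≤ c⁻¹ * ‖f x‖
    rw [inv_mul_eq_div, le_div_iff₀ hc]
    calc ‖x‖ * c = c * ‖x‖ := mul_comm _ _
      _ ≤ ‖f x‖ := h
  have hclosed : IsClosed (Set.range f) := hanti.isClosed_range f.uniformContinuous
  -- range S = range f as sets
  have hrange : (LinearMap.range (S : V →ₗ[𝕜] V) : Set V) = Set.range f := by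
    ext y
    constructor
    · rintro ⟨x, rfl⟩
      have hx : x ∈ (LinearMap.ker (S : V →ₗ[𝕜] V) ⊔ q : Submodule 𝕜 V) := by
        rw [hq_compl.sup_eq_top]; trivial
      obtain ⟨k, hk, w, hw, rfl⟩ := Submodule.mem_sup.mp hx
      refine ⟨⟨w, hw⟩, ?_⟩
      simp only [hf, ContinuousLinearMap.comp_apply, Submodule.subtypeL_apply]
      rw [map_add, LinearMap.mem_ker.mp hk, zero_add]; rfl
    · rintro ⟨w, rfl⟩
      exact ⟨(w : V), rfl⟩
  rw [show (LinearMap.range ((lam • ContinuousLinearMap.id 𝕜 V - T : V →L[𝕜] V) : V →ₗ[𝕜] V) : Set V)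
      = (LinearMap.range (S : V →ₗ[𝕜] V) : Set V) from rfl, hrange]
  exact hclosed
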